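/- Let M, N be positive natural numbers and let d be a dataset of N instances with M binary protected attributes, where each instance carries both a true binary label and a predicted binary label. Suppose every vertex (level-0 hypercube) contains at least one instance. Then the minimum accuracy per level, Acc_min(K) = min over all hypercubes x of level K of Acc(x), is monotonically increasing in K, and the maximum accuracy per level, Acc_max(K) = max over all hypercubes x of level K of Acc(x), is monotonically decreasing in K: for every K with 1 ≤ K ≤ M, Acc_min(K-1) ≤ Acc_min(K) and Acc_max(K) ≤ Acc_max(K-1). -/

import Mathlib

/-- An attribute vector `v` belongs to the hypercube `x` if it matches all specified coordinates. -/
def Belongs {M : ℕ} (x : Fin M → Option Bool) (v : Fin M → Bool) : Prop :=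
  ∀ i : Fin M, ∀ b : Bool, x i = some b → v i = b

instance {M : ℕ} (x : Fin M → Option Bool) (v : Fin M → Bool) : Decidable (Belongs x v) := by
  unfold Belongs; infer_instance

/-- The level of a hypercube: the number of its stars (unspecified coordinates). -/
def level {M : ℕ} (x : Fin M → Option Bool) : ℕ :=
  (Finset.univ.filter fun i => x i = none).card

/-- The finset of all hypercubes of level `K`. -/
def levelSet (M K : ℕ) : Finset (Fin M → Option Bool) :=
  Finset.univ.filter fun x => level x = K

/-- N(x): the number of instances of the dataset `d` (with true and predicted labels)
whose attribute vector belongs to `x`. -/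
def cnt {M N : ℕ} (d : Fin N → (Fin M → Bool) × Bool × Bool) (x : Fin M → Option Bool) : ℕ :=
  (Finset.univ.filter fun n => Belongs x (d n).1).card

/-- The number of correctly classified instances (true label = predicted label) in `x`. -/
def cntCorrect {M N : ℕ} (d : Fin N → (Fin M → Bool) × Bool × Bool)
    (x : Fin M → Option Bool) : ℕ :=
  (Finset.univ.filter fun n => Belongs x (d n).1 ∧ (d n).2.1 = (d n).2.2).card

/-- The accuracy of hypercube `x`: Acc(x) = (number of correct instances in x)/N(x). -/
def accuracy {M N : ℕ} (d : Fin N → (Fin M → Bool) × Bool × Bool)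
    (x : Fin M → Option Bool) : ℚ :=
  (cntCorrect d x : ℚ) / (cnt d x : ℚ)

/-- Acc_min(K): minimum accuracy over all hypercubes of level `K`
(the level set is nonempty whenever `K ≤ M`, so the junk value `0` is never used there). -/
def accuracyMin {M N : ℕ} (d : Fin N → (Fin M → Bool) × Bool × Bool) (K : ℕ) : ℚ :=
  WithTop.untopD 0 (((levelSet M K).image (accuracy d)).min)

/-- Acc_max(K): maximum accuracy over all hypercubes of level `K`. -/
def accuracyMax {M N : ℕ} (d : Fin N → (Fin M → Bool) × Bool × Bool) (K : ℕ) : ℚ :=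
  WithBot.unbotD 0 (((levelSet M K).image (accuracy d)).max)

open Finset

lemma belongs_update {M : ℕ} (x : Fin M → Option Bool) (j : Fin M) (hj : x j = none)
    (b : Bool) (v : Fin M → Bool) :
    Belongs (Function.update x j (some b)) v ↔ Belongs x v ∧ v j = b := by
  constructor
  · intro h
    refine ⟨fun i b' hi => ?_, h j b (by simp)⟩
    have hij : i ≠ j := fun he => by rw [he, hj] at hi; cases hi
    exact h i b' (by rw [Function.update_of_ne hij]; exact hi)
  · rintro ⟨h1, h2⟩ i b' hi
    by_cases hij : i = j
    · subst hij; simp at hi; rw [h2, ← hi]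
    · exact h1 i b' (by rwa [Function.update_of_ne hij] at hi)

lemma filter_split {α : Type*} [Fintype α] (P : α → Prop) [DecidablePred P] (f : α → Bool) :
    (univ.filter P).card =
      (univ.filter fun a => P a ∧ f a = false).card +
      (univ.filter fun a => P a ∧ f a = true).card := by
  rw [← Finset.filter_filter, ← Finset.filter_filter]
  have h : (univ.filter P).filter (fun a => f a = true)
      = (univ.filter P).filter (fun a => ¬ (f a = false)) := by
    apply Finset.filter_congr; intro a _; simp
  rw [h, Finset.card_filter_add_card_filter_not]

lemma cnt_split {M N : ℕ} (d : Fin N → (Fin M → Bool) × Bool × Bool)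
    (x : Fin M → Option Bool) (j : Fin M) (hj : x j = none) :
    cnt d x = cnt d (Function.update x j (some false)) + cnt d (Function.update x j (some true)) := by
  unfold cnt
  rw [filter_split (fun n => Belongs x (d n).1) (fun n => (d n).1 j)]
  congr 1 <;>
  · congr 1
    ext n
    simp only [mem_filter, mem_univ, true_and, belongs_update x j hj]

lemma cntCorrect_split {M N : ℕ} (d : Fin N → (Fin M → Bool) × Bool × Bool)
    (x : Fin M → Option Bool) (j : Fin M) (hj : x j = none) :
    cntCorrect d x = cntCorrect d (Function.update x j (some false))
      + cntCorrect d (Function.update x j (some true)) := by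
  unfold cntCorrect
  rw [filter_split (fun n => Belongs x (d n).1 ∧ (d n).2.1 = (d n).2.2) (fun n => (d n).1 j)]
  congr 1 <;>
  · congr 1
    ext n
    simp only [mem_filter, mem_univ, true_and, belongs_update x j hj]
    tauto

lemma level_update {M : ℕ} (x : Fin M → Option Bool) (j : Fin M) (hj : x j = none) (b : Bool) :
    level (Function.update x j (some b)) = level x - 1 := by
  unfold level
  have h : (univ.filter fun i => Function.update x j (some b) i = none)
      = (univ.filter fun i => x i = none).erase j := by
    ext i
    simp only [mem_filter, mem_univ, true_and, mem_erase]
    by_cases hij : i = j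
    · subst hij; simp
    · rw [Function.update_of_ne hij]; tauto
  rw [h, Finset.card_erase_of_mem (by simp [hj])]

lemma cnt_pos {M N : ℕ} (d : Fin N → (Fin M → Bool) × Bool × Bool)
    (hvert : ∀ v : Fin M → Bool, 0 < cnt d (fun i => some (v i)))
    (x : Fin M → Option Bool) : 0 < cnt d x := by
  have hle : cnt d (fun i => some ((x i).getD false)) ≤ cnt d x := by
    apply Finset.card_le_card
    intro n hn
    simp only [mem_filter, mem_univ, true_and] at hn ⊢
    intro i b hi
    have h1 : (d n).1 i = (x i).getD false := hn i _ rfl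
    rw [h1, hi]; rfl
  exact lt_of_lt_of_le (hvert _) hle

lemma levelSet_nonempty (M K : ℕ) (h : K ≤ M) : (levelSet M K).Nonempty := by
  refine ⟨fun i => if (i : ℕ) < K then none else some false, ?_⟩
  simp only [levelSet, level, mem_filter, mem_univ, true_and]
  have h1 : (univ.filter fun i : Fin M => (if (i : ℕ) < K then none else some false) = none)
      = univ.filter fun i : Fin M => (i : ℕ) < K := by
    apply Finset.filter_congr; intro i _; split <;> simp_all
  refine mem_filter.mpr ⟨mem_univ _, ?_⟩
  beta_reduce
  rw [h1]
  have h2 : (univ.filter fun i : Fin M => (i : ℕ) < K)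
      = (univ : Finset (Fin K)).map (Fin.castLEEmb h) := by
    ext i
    simp only [mem_filter, mem_univ, true_and, Finset.mem_map]
    constructor
    · intro hi; exact ⟨⟨i, hi⟩, rfl⟩
    · rintro ⟨k, rfl⟩; exact k.isLt
  rw [h2, Finset.card_map, Finset.card_univ, Fintype.card_fin]

lemma mediant (a c n m : ℚ) (hn : 0 < n) (hm : 0 < m) :
    min (a / n) (c / m) ≤ (a + c) / (n + m) ∧ (a + c) / (n + m) ≤ max (a / n) (c / m) := by
  rcases le_total (a / n) (c / m) with h | h
  · have h' : a * m ≤ c * n := by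
      rw [div_le_div_iff₀ hn hm] at h; linarith
    constructor
    · rw [min_eq_left h, div_le_div_iff₀ hn (by linarith)]; nlinarith
    · rw [max_eq_right h, div_le_div_iff₀ (by linarith) hm]; nlinarith
  · have h' : c * n ≤ a * m := by
      rw [div_le_div_iff₀ hm hn] at h; linarith
    constructor
    · rw [min_eq_right h, div_le_div_iff₀ hm (by linarith)]; nlinarith
    · rw [max_eq_left h, div_le_div_iff₀ (by linarith) hn]; nlinarith

/-- If every vertex contains at least one instance, the minimum accuracy per
level is monotonically increasing and the maximum accuracy per level is monotonically
decreasing in the level. -/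
theorem accuracy_min_max_mono (M N : ℕ) (hM : 0 < M) (hN : 0 < N)
    (d : Fin N → (Fin M → Bool) × Bool × Bool)
    (hvert : ∀ v : Fin M → Bool, 0 < cnt d (fun i => some (v i)))
    (K : ℕ) (hK1 : 1 ≤ K) (hKM : K ≤ M) :
    accuracyMin d (K - 1) ≤ accuracyMin d K ∧ accuracyMax d K ≤ accuracyMax d (K - 1) := by
  have hK'M : K - 1 ≤ M := le_trans (Nat.sub_le K 1) hKM
  have hne : (levelSet M K).Nonempty := levelSet_nonempty M K hKM
  have hne' : (levelSet M (K - 1)).Nonempty := levelSet_nonempty M (K - 1) hK'M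
  have hneI : ((levelSet M K).image (accuracy d)).Nonempty := hne.image _
  have hneI' : ((levelSet M (K - 1)).image (accuracy d)).Nonempty := hne'.image _
  have key : ∀ x ∈ levelSet M K, ∃ y ∈ levelSet M (K - 1), ∃ z ∈ levelSet M (K - 1),
      accuracy d y ≤ accuracy d x ∧ accuracy d x ≤ accuracy d z := by
    intro x hx
    simp only [levelSet, mem_filter, mem_univ, true_and] at hx
    have hjex : ∃ j, x j = none := by
      have hc : 0 < (univ.filter fun i => x i = none).card := by
        show 0 < level x
        omega
      obtain ⟨j, hj⟩ := Finset.card_pos.mp hc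
      exact ⟨j, (mem_filter.mp hj).2⟩
    obtain ⟨j, hj⟩ := hjex
    set x0 := Function.update x j (some false) with hx0
    set x1 := Function.update x j (some true) with hx1
    have h0 : x0 ∈ levelSet M (K - 1) := by
      simp only [levelSet, mem_filter, mem_univ, true_and, hx0, level_update x j hj, hx]
    have h1 : x1 ∈ levelSet M (K - 1) := by
      simp only [levelSet, mem_filter, mem_univ, true_and, hx1, level_update x j hj, hx]
    have hn0 : (0 : ℚ) < (cnt d x0 : ℚ) := by exact_mod_cast cnt_pos d hvert x0
    have hn1 : (0 : ℚ) < (cnt d x1 : ℚ) := by exact_mod_cast cnt_pos d hvert x1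
    have hacc : accuracy d x
        = ((cntCorrect d x0 : ℚ) + (cntCorrect d x1 : ℚ)) / ((cnt d x0 : ℚ) + (cnt d x1 : ℚ)) := by
      rw [accuracy, cnt_split d x j hj, cntCorrect_split d x j hj]
      push_cast
      rfl
    obtain ⟨hlo, hhi⟩ := mediant (cntCorrect d x0 : ℚ) (cntCorrect d x1 : ℚ)
      (cnt d x0 : ℚ) (cnt d x1 : ℚ) hn0 hn1
    have hlo' : min (accuracy d x0) (accuracy d x1) ≤ accuracy d x := by
      rw [hacc]; exact hlo
    have hhi' : accuracy d x ≤ max (accuracy d x0) (accuracy d x1) := by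
      rw [hacc]; exact hhi
    rcases le_total (accuracy d x0) (accuracy d x1) with h | h
    · exact ⟨x0, h0, x1, h1, by rwa [min_eq_left h] at hlo', by rwa [max_eq_right h] at hhi'⟩
    · exact ⟨x1, h1, x0, h0, by rwa [min_eq_right h] at hlo', by rwa [max_eq_left h] at hhi'⟩
  constructor
  · rw [accuracyMin, accuracyMin, ← Finset.coe_min' hneI, ← Finset.coe_min' hneI',
      WithTop.untopD_coe, WithTop.untopD_coe]
    apply Finset.le_min'
    intro q hq
    obtain ⟨x, hx, rfl⟩ := Finset.mem_image.mp hq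
    obtain ⟨y, hy, -, -, hyx, -⟩ := key x hx
    exact le_trans (Finset.min'_le _ _ (Finset.mem_image_of_mem _ hy)) hyx
  · rw [accuracyMax, accuracyMax, ← Finset.coe_max' hneI, ← Finset.coe_max' hneI',
      WithBot.unbotD_coe, WithBot.unbotD_coe]
    apply Finset.max'_le
    intro q hq
    obtain ⟨x, hx, rfl⟩ := Finset.mem_image.mp hq
    obtain ⟨-, -, z, hz, -, hxz⟩ := key x hx
    exact le_trans hxz (Finset.le_max' _ _ (Finset.mem_image_of_mem _ hz))
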